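/- Under the bounded odds-ratio assumption with constant Γ ≥ 1, the symmetrized KL divergence between the reweighted treatment and control densities satisfies D_KL(g_η(·|T=1)||g_η(·|T=0)) + D_KL(g_η(·|T=0)||g_η(·|T=1)) ≤ 4 log Γ, and hence the total variation distance satisfies TV(g_η(·|T=1), g_η(·|T=0)) ≤ √(log Γ). -/

import Mathlib

open MeasureTheory Real

lemma log_ge_two_mul_sub_div (t : ℝ) (ht : 1 ≤ t) :
    2 * (t - 1) / (t + 1) ≤ Real.log t := by
  have ht1 : (0:ℝ) < t + 1 := by linarith
  have hderiv : ∀ x ∈ interior (Set.Ici (1:ℝ)),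
      HasDerivAt (fun s : ℝ => Real.log s + 4 / (s + 1)) (1 / x - 4 / (x + 1) ^ 2) x := by
    intro x hx
    rw [interior_Ici] at hx
    have hx0 : (0:ℝ) < x := lt_trans zero_lt_one hx
    have hx1 : x + 1 ≠ 0 := by positivity
    have h1 : HasDerivAt Real.log (1 / x) x := by
      simpa [one_div] using Real.hasDerivAt_log hx0.ne'
    have h2 : HasDerivAt (fun s : ℝ => s + 1) 1 x := (hasDerivAt_id x).add_const 1
    have h3 : HasDerivAt (fun s : ℝ => 4 / (s + 1)) (-(4 / (x + 1) ^ 2)) x := by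
      have h4 := (h2.inv hx1).const_mul (4:ℝ)
      simp only [div_eq_mul_inv]
      rw [show -(4 * ((x + 1) ^ 2)⁻¹) = 4 * (-1 / (x + 1) ^ 2) by ring]
      exact h4
    rw [sub_eq_add_neg]; exact h1.add h3
  have mono : MonotoneOn (fun s : ℝ => Real.log s + 4 / (s + 1)) (Set.Ici 1) := by
    apply monotoneOn_of_deriv_nonneg (convex_Ici 1)
    · apply ContinuousOn.add
      · exact Real.continuousOn_log.mono (fun x hx => by
          simp only [Set.mem_Ici] at hx
          simp only [Set.mem_compl_iff, Set.mem_singleton_iff]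
          intro h; rw [h] at hx; linarith)
      · apply ContinuousOn.div continuousOn_const (continuousOn_id.add continuousOn_const)
        intro x hx
        simp only [Set.mem_Ici] at hx
        intro h
        simp only [Pi.add_apply, id] at h
        linarith
    · intro x hx
      exact (hderiv x hx).differentiableAt.differentiableWithinAt
    · intro x hx
      rw [(hderiv x hx).deriv]
      rw [interior_Ici] at hx
      have hx0 : (0:ℝ) < x := lt_trans zero_lt_one hx
      rw [sub_nonneg, div_le_div_iff₀ (by positivity) hx0]
      nlinarith [sq_nonneg (x - 1)]
  have h1 : (fun s : ℝ => Real.log s + 4 / (s + 1)) 1 ≤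
      (fun s : ℝ => Real.log s + 4 / (s + 1)) t :=
    mono (Set.mem_Ici.2 le_rfl) (Set.mem_Ici.2 ht) ht
  simp only [Real.log_one] at h1
  rw [div_le_iff₀ ht1]
  have h2 : Real.log t ≥ 2 - 4 / (t + 1) := by
    norm_num at h1
    linarith
  have h4 : (4 / (t + 1)) * (t + 1) = 4 := by field_simp
  nlinarith [h2, ht1]

lemma key_ineq (a b : ℝ) (ha : 0 < a) (hb : 0 < b) :
    2 * (a - b) ^ 2 / (a + b) ≤ (a - b) * Real.log (a / b) := by
  have main : ∀ c d : ℝ, 0 < c → 0 < d → d ≤ c →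
      2 * (c - d) ^ 2 / (c + d) ≤ (c - d) * Real.log (c / d) := by
    intro c d hc hd hdc
    have ht : 1 ≤ c / d := (one_le_div hd).2 hdc
    have h1 := log_ge_two_mul_sub_div (c / d) ht
    have h2 : 2 * (c / d - 1) / (c / d + 1) = 2 * (c - d) / (c + d) := by
      rw [div_eq_div_iff (by positivity) (by positivity)]
      field_simp
    rw [h2] at h1
    have h3 : 0 ≤ c - d := by linarith
    have h4 := mul_le_mul_of_nonneg_left h1 h3
    calc 2 * (c - d) ^ 2 / (c + d) = (c - d) * (2 * (c - d) / (c + d)) := by ring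
    _ ≤ (c - d) * Real.log (c / d) := h4
  rcases le_total b a with h | h
  · exact main a b ha hb h
  · have := main b a hb ha h
    have hlog : Real.log (a / b) = -Real.log (b / a) := by
      rw [← Real.log_inv, inv_div]
    have e1 : 2 * (a - b) ^ 2 / (a + b) = 2 * (b - a) ^ 2 / (b + a) := by ring
    have e2 : (a - b) * -Real.log (b / a) = (b - a) * Real.log (b / a) := by ring
    rw [hlog, e2, e1]
    exact this

/-- Under the bounded odds-ratio assumption with constant `Γ ≥ 1`, the symmetrized KL
divergence between the reweighted treatment and control densities is at most
`4 log Γ`, and the total variation distance `(1/2)∫|g₁ − g₀|` is at most `√(log Γ)`. -/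
theorem symmetrized_kl_and_tv_bound
    {𝒳 : Type*} [MeasurableSpace 𝒳] (μ : Measure 𝒳)
    (p e eη f : 𝒳 → ℝ) (Γ : ℝ)
    (hp_pos : ∀ x, 0 < p x) (hp_int : Integrable p μ) (hp_one : ∫ x, p x ∂μ = 1)
    (he : ∀ x, 0 < e x ∧ e x < 1) (heη : ∀ x, 0 < eη x ∧ eη x < 1)
    (hf_pos : ∀ x, 0 < f x)
    (hΓ : 1 ≤ Γ)
    (hodds : ∀ x, 1 / Γ ≤ e x * (1 - eη x) / (eη x * (1 - e x)) ∧
                  e x * (1 - eη x) / (eη x * (1 - e x)) ≤ Γ)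
    (Z1 Z0 : ℝ)
    (hZ1 : Z1 = ∫ x, f x * (e x * p x) / eη x ∂μ)
    (hZ0 : Z0 = ∫ x, f x * ((1 - e x) * p x) / (1 - eη x) ∂μ)
    (hint1 : Integrable (fun x => f x * (e x * p x) / eη x) μ)
    (hint0 : Integrable (fun x => f x * ((1 - e x) * p x) / (1 - eη x)) μ)
    (hZ1_pos : 0 < Z1) (hZ0_pos : 0 < Z0)
    (g1 g0 : 𝒳 → ℝ)
    (hg1 : ∀ x, g1 x = f x * (e x * p x) / eη x / Z1)
    (hg0 : ∀ x, g0 x = f x * ((1 - e x) * p x) / (1 - eη x) / Z0) :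
    (∫ x, g1 x * Real.log (g1 x / g0 x) ∂μ)
      + (∫ x, g0 x * Real.log (g0 x / g1 x) ∂μ) ≤ 4 * Real.log Γ ∧
    (1 / 2) * ∫ x, |g1 x - g0 x| ∂μ ≤ Real.sqrt (Real.log Γ) := by
  have hΓ0 : (0:ℝ) < Γ := lt_of_lt_of_le zero_lt_one hΓ
  have hlogΓ : 0 ≤ Real.log Γ := Real.log_nonneg hΓ
  have hg1pos : ∀ x, 0 < g1 x := by
    intro x
    rw [hg1 x]
    exact div_pos (div_pos (mul_pos (hf_pos x) (mul_pos (he x).1 (hp_pos x))) (heη x).1) hZ1_pos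
  have hg0pos : ∀ x, 0 < g0 x := by
    intro x
    rw [hg0 x]
    exact div_pos (div_pos (mul_pos (hf_pos x)
      (mul_pos (by linarith [(he x).2] : (0:ℝ) < 1 - e x) (hp_pos x)))
      (by linarith [(heη x).2] : (0:ℝ) < 1 - eη x)) hZ0_pos
  have hrpos : ∀ x, 0 < e x * (1 - eη x) / (eη x * (1 - e x)) := by
    intro x
    exact div_pos (mul_pos (he x).1 (by linarith [(heη x).2]))
      (mul_pos (heη x).1 (by linarith [(he x).2]))
  have hZratio_pos : 0 < Z0 / Z1 := div_pos hZ0_pos hZ1_pos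
  have hratio : ∀ x, g1 x / g0 x
      = e x * (1 - eη x) / (eη x * (1 - e x)) * (Z0 / Z1) := by
    intro x
    rw [hg1 x, hg0 x]
    have h1 : eη x ≠ 0 := (heη x).1.ne'
    have h2 : (1:ℝ) - eη x ≠ 0 := (by linarith [(heη x).2] : (0:ℝ) < 1 - eη x).ne'
    have h3 : (1:ℝ) - e x ≠ 0 := (by linarith [(he x).2] : (0:ℝ) < 1 - e x).ne'
    have h5 : f x ≠ 0 := (hf_pos x).ne'
    have h6 : p x ≠ 0 := (hp_pos x).ne'
    have h7 : Z1 ≠ 0 := hZ1_pos.ne'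
    have h8 : Z0 ≠ 0 := hZ0_pos.ne'
    field_simp
  have hLeq : ∀ x, Real.log (g1 x / g0 x)
      = Real.log (e x * (1 - eη x) / (eη x * (1 - e x))) + Real.log (Z0 / Z1) := by
    intro x
    rw [hratio x, Real.log_mul (hrpos x).ne' hZratio_pos.ne']
  have hlogr_abs : ∀ x, |Real.log (e x * (1 - eη x) / (eη x * (1 - e x)))| ≤ Real.log Γ := by
    intro x
    rw [abs_le]
    constructor
    · have h1 : Real.log (1 / Γ) ≤ Real.log (e x * (1 - eη x) / (eη x * (1 - e x))) :=
        Real.log_le_log (by positivity) (hodds x).1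
      rwa [Real.log_div one_ne_zero hΓ0.ne', Real.log_one, zero_sub] at h1
    · exact Real.log_le_log (hrpos x) (hodds x).2
  have hg1eq : g1 = fun x => f x * (e x * p x) / eη x / Z1 := funext hg1
  have hg0eq : g0 = fun x => f x * ((1 - e x) * p x) / (1 - eη x) / Z0 := funext hg0
  have hig1 : Integrable g1 μ := by rw [hg1eq]; exact hint1.div_const Z1
  have hig0 : Integrable g0 μ := by rw [hg0eq]; exact hint0.div_const Z0
  have hg1one : ∫ x, g1 x ∂μ = 1 := by
    rw [hg1eq, integral_div, ← hZ1, div_self hZ1_pos.ne']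
  have hg0one : ∫ x, g0 x ∂μ = 1 := by
    rw [hg0eq, integral_div, ← hZ0, div_self hZ0_pos.ne']
  have hm1 : AEMeasurable g1 μ := hig1.aemeasurable
  have hm0 : AEMeasurable g0 μ := hig0.aemeasurable
  have hmL : AEMeasurable (fun x => Real.log (g1 x / g0 x)) μ :=
    Real.measurable_log.comp_aemeasurable (hm1.div hm0)
  have hLbdd : ∀ x, |Real.log (g1 x / g0 x)| ≤ Real.log Γ + |Real.log (Z0 / Z1)| := by
    intro x
    rw [hLeq x]
    exact (abs_add_le _ _).trans (add_le_add_left (hlogr_abs x) _)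
  have hint_g1L : Integrable (fun x => g1 x * Real.log (g1 x / g0 x)) μ := by
    have h := Integrable.bdd_mul (c := Real.log Γ + |Real.log (Z0 / Z1)|) hig1
      hmL.aestronglyMeasurable (ae_of_all _ fun x => by
        simpa [Real.norm_eq_abs] using hLbdd x)
    exact h.congr (ae_of_all _ fun x => mul_comm _ _)
  have hint_g0L : Integrable (fun x => g0 x * Real.log (g1 x / g0 x)) μ := by
    have h := Integrable.bdd_mul (c := Real.log Γ + |Real.log (Z0 / Z1)|) hig0
      hmL.aestronglyMeasurable (ae_of_all _ fun x => by
        simpa [Real.norm_eq_abs] using hLbdd x)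
    exact h.congr (ae_of_all _ fun x => mul_comm _ _)
  have hint_dL : Integrable (fun x => (g1 x - g0 x) * Real.log (g1 x / g0 x)) μ :=
    (hint_g1L.sub hint_g0L).congr (ae_of_all _ fun x => by
      simp only [Pi.sub_apply]; ring)
  have hmlogr : AEMeasurable (fun x => Real.log (e x * (1 - eη x) / (eη x * (1 - e x)))) μ := by
    have heq : (fun x => Real.log (e x * (1 - eη x) / (eη x * (1 - e x))))
        = fun x => Real.log (g1 x / g0 x) - Real.log (Z0 / Z1) :=
      funext fun x => by rw [hLeq x]; ring
    rw [heq]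
    exact hmL.sub aemeasurable_const
  have hint_dlogr :
      Integrable (fun x => (g1 x - g0 x) * Real.log (e x * (1 - eη x) / (eη x * (1 - e x)))) μ := by
    have h := Integrable.bdd_mul (c := Real.log Γ) (hig1.sub hig0)
      hmlogr.aestronglyMeasurable (ae_of_all _ fun x => by
        simpa [Real.norm_eq_abs] using hlogr_abs x)
    exact h.congr (ae_of_all _ fun x => mul_comm _ _)
  have hptneg : ∀ x, g0 x * Real.log (g0 x / g1 x) = -(g0 x * Real.log (g1 x / g0 x)) := by
    intro x
    rw [show g0 x / g1 x = (g1 x / g0 x)⁻¹ from (inv_div _ _).symm, Real.log_inv]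
    ring
  have hsecond : ∫ x, g0 x * Real.log (g0 x / g1 x) ∂μ
      = - ∫ x, g0 x * Real.log (g1 x / g0 x) ∂μ := by
    calc ∫ x, g0 x * Real.log (g0 x / g1 x) ∂μ
        = ∫ x, -(g0 x * Real.log (g1 x / g0 x)) ∂μ :=
          integral_congr_ae (ae_of_all _ fun x => hptneg x)
      _ = - ∫ x, g0 x * Real.log (g1 x / g0 x) ∂μ := integral_neg _
  have hsub : ∀ x, g1 x * Real.log (g1 x / g0 x) - g0 x * Real.log (g1 x / g0 x)
      = (g1 x - g0 x) * Real.log (g1 x / g0 x) := fun x => by ring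
  have hSum : (∫ x, g1 x * Real.log (g1 x / g0 x) ∂μ)
      + (∫ x, g0 x * Real.log (g0 x / g1 x) ∂μ)
      = ∫ x, (g1 x - g0 x) * Real.log (g1 x / g0 x) ∂μ := by
    rw [hsecond, ← sub_eq_add_neg, ← integral_sub hint_g1L hint_g0L]
    exact integral_congr_ae (ae_of_all _ fun x => hsub x)
  have hint_dconst : Integrable (fun x => (g1 x - g0 x) * Real.log (Z0 / Z1)) μ :=
    (hig1.sub hig0).mul_const _
  have hSsplit : ∫ x, (g1 x - g0 x) * Real.log (g1 x / g0 x) ∂μ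
      = ∫ x, (g1 x - g0 x) * Real.log (e x * (1 - eη x) / (eη x * (1 - e x))) ∂μ := by
    have hptw : (fun x => (g1 x - g0 x) * Real.log (g1 x / g0 x))
        = fun x => (g1 x - g0 x) * Real.log (e x * (1 - eη x) / (eη x * (1 - e x)))
            + (g1 x - g0 x) * Real.log (Z0 / Z1) :=
      funext fun x => by rw [hLeq x]; ring
    rw [hptw, integral_add hint_dlogr hint_dconst]
    have hzero : ∫ x, (g1 x - g0 x) * Real.log (Z0 / Z1) ∂μ = 0 := by
      rw [integral_mul_const, integral_sub hig1 hig0, hg1one, hg0one]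
      ring
    rw [hzero, add_zero]
  have hSle : ∫ x, (g1 x - g0 x) * Real.log (e x * (1 - eη x) / (eη x * (1 - e x))) ∂μ
      ≤ 2 * Real.log Γ := by
    have hptw : ∀ x, (g1 x - g0 x) * Real.log (e x * (1 - eη x) / (eη x * (1 - e x)))
        ≤ (g1 x + g0 x) * Real.log Γ := by
      intro x
      have habs : |g1 x - g0 x| ≤ g1 x + g0 x := by
        rw [abs_le]
        constructor <;> [linarith [hg1pos x, hg0pos x]; linarith [hg1pos x, hg0pos x]]
      calc (g1 x - g0 x) * Real.log (e x * (1 - eη x) / (eη x * (1 - e x)))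
          ≤ |(g1 x - g0 x) * Real.log (e x * (1 - eη x) / (eη x * (1 - e x)))| := le_abs_self _
        _ = |g1 x - g0 x| * |Real.log (e x * (1 - eη x) / (eη x * (1 - e x)))| := abs_mul _ _
        _ ≤ (g1 x + g0 x) * Real.log Γ :=
            mul_le_mul habs (hlogr_abs x) (abs_nonneg _)
              (by linarith [hg1pos x, hg0pos x])
    have hintR : Integrable (fun x => (g1 x + g0 x) * Real.log Γ) μ := (hig1.add hig0).mul_const _
    calc ∫ x, (g1 x - g0 x) * Real.log (e x * (1 - eη x) / (eη x * (1 - e x))) ∂μ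
        ≤ ∫ x, (g1 x + g0 x) * Real.log Γ ∂μ := integral_mono hint_dlogr hintR hptw
      _ = 2 * Real.log Γ := by
          rw [integral_mul_const, integral_add hig1 hig0, hg1one, hg0one]; ring
  have hSbound : ∫ x, (g1 x - g0 x) * Real.log (g1 x / g0 x) ∂μ ≤ 2 * Real.log Γ :=
    hSsplit ▸ hSle
  have hkey : ∀ x, 2 * (g1 x - g0 x) ^ 2 / (g1 x + g0 x)
      ≤ (g1 x - g0 x) * Real.log (g1 x / g0 x) :=
    fun x => key_ineq _ _ (hg1pos x) (hg0pos x)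
  have hs_pos : ∀ x, 0 < g1 x + g0 x := fun x => add_pos (hg1pos x) (hg0pos x)
  have hS0 : 0 ≤ ∫ x, (g1 x - g0 x) * Real.log (g1 x / g0 x) ∂μ := by
    refine integral_nonneg fun x => le_trans ?_ (hkey x)
    have h1 := hs_pos x
    positivity
  constructor
  · rw [hSum]
    linarith [hSbound, hlogΓ]
  · -- TV part
    set S := ∫ x, (g1 x - g0 x) * Real.log (g1 x / g0 x) ∂μ with hS_def
    have hid : Integrable (fun x => g1 x - g0 x) μ := hig1.sub hig0
    have his : Integrable (fun x => g1 x + g0 x) μ := hig1.add hig0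
    have hdm : AEMeasurable (fun x => g1 x - g0 x) μ := hm1.sub hm0
    have hsm : AEMeasurable (fun x => g1 x + g0 x) μ := hm1.add hm0
    have hvm : AEMeasurable (fun x => Real.sqrt (g1 x + g0 x)) μ :=
      Real.continuous_sqrt.measurable.comp_aemeasurable hsm
    have hum : AEMeasurable (fun x => |g1 x - g0 x| / Real.sqrt (g1 x + g0 x)) μ :=
      (continuous_abs.measurable.comp_aemeasurable hdm).div hvm
    have hfu : AEMeasurable (fun x => ENNReal.ofReal (|g1 x - g0 x| / Real.sqrt (g1 x + g0 x))) μ :=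
      ENNReal.measurable_ofReal.comp_aemeasurable hum
    have hfv : AEMeasurable (fun x => ENNReal.ofReal (Real.sqrt (g1 x + g0 x))) μ :=
      ENNReal.measurable_ofReal.comp_aemeasurable hvm
    have hCS := ENNReal.lintegral_mul_le_Lp_mul_Lq μ (p := 2) (q := 2)
      ⟨by norm_num, by norm_num, by norm_num⟩ hfu hfv
    simp only [Pi.mul_apply] at hCS
    -- identify LHS
    have hsqrt_ne : ∀ x, Real.sqrt (g1 x + g0 x) ≠ 0 :=
      fun x => (Real.sqrt_pos.2 (hs_pos x)).ne'
    have hLHS : ∫⁻ x, ENNReal.ofReal (|g1 x - g0 x| / Real.sqrt (g1 x + g0 x))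
        * ENNReal.ofReal (Real.sqrt (g1 x + g0 x)) ∂μ
        = ENNReal.ofReal (∫ x, |g1 x - g0 x| ∂μ) := by
      rw [ofReal_integral_eq_lintegral_ofReal hid.abs
        (ae_of_all _ fun x => abs_nonneg _)]
      have hptw : ∀ x, ENNReal.ofReal (|g1 x - g0 x| / Real.sqrt (g1 x + g0 x))
          * ENNReal.ofReal (Real.sqrt (g1 x + g0 x)) = ENNReal.ofReal (|g1 x - g0 x|) := by
        intro x
        rw [← ENNReal.ofReal_mul (by positivity)]
        congr 1
        exact div_mul_cancel₀ _ (hsqrt_ne x)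
      exact lintegral_congr fun x => hptw x
    -- squares
    have hsq : ∀ t : ℝ, 0 ≤ t → (ENNReal.ofReal t) ^ (2:ℝ) = ENNReal.ofReal (t * t) := by
      intro t ht
      rw [show (2:ℝ) = ((2:ℕ):ℝ) by norm_num, ENNReal.rpow_natCast, pow_two,
        ← ENNReal.ofReal_mul ht]
    have hIu : ∫⁻ x, ENNReal.ofReal (|g1 x - g0 x| / Real.sqrt (g1 x + g0 x)) ^ (2:ℝ) ∂μ
        ≤ ENNReal.ofReal (1 / 2 * S) := by
      have huu : ∀ x, (|g1 x - g0 x| / Real.sqrt (g1 x + g0 x))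
          * (|g1 x - g0 x| / Real.sqrt (g1 x + g0 x))
          = (g1 x - g0 x) ^ 2 / (g1 x + g0 x) := by
        intro x
        rw [div_mul_div_comm, abs_mul_abs_self, Real.mul_self_sqrt (hs_pos x).le]
        ring
      have hptw2 : ∀ x, (g1 x - g0 x) ^ 2 / (g1 x + g0 x)
          ≤ 1 / 2 * ((g1 x - g0 x) * Real.log (g1 x / g0 x)) := by
        intro x
        have h1 := hkey x
        have h2 : 2 * ((g1 x - g0 x) ^ 2 / (g1 x + g0 x))
            = 2 * (g1 x - g0 x) ^ 2 / (g1 x + g0 x) := by ring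
        linarith
      have hnn : ∀ x, 0 ≤ 1 / 2 * ((g1 x - g0 x) * Real.log (g1 x / g0 x)) := by
        intro x
        have h1 := hkey x
        have h2 := hs_pos x
        have h3 : 0 ≤ 2 * (g1 x - g0 x) ^ 2 / (g1 x + g0 x) := by positivity
        linarith
      have hptsq : ∀ x, ENNReal.ofReal (|g1 x - g0 x| / Real.sqrt (g1 x + g0 x)) ^ (2:ℝ)
          = ENNReal.ofReal ((g1 x - g0 x) ^ 2 / (g1 x + g0 x)) := by
        intro x
        rw [hsq _ (by positivity), huu x]
      calc ∫⁻ x, ENNReal.ofReal (|g1 x - g0 x| / Real.sqrt (g1 x + g0 x)) ^ (2:ℝ) ∂μ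
          = ∫⁻ x, ENNReal.ofReal ((g1 x - g0 x) ^ 2 / (g1 x + g0 x)) ∂μ :=
            lintegral_congr fun x => hptsq x
        _ ≤ ∫⁻ x, ENNReal.ofReal (1 / 2 * ((g1 x - g0 x) * Real.log (g1 x / g0 x))) ∂μ :=
            lintegral_mono fun x => ENNReal.ofReal_le_ofReal (hptw2 x)
        _ = ENNReal.ofReal (∫ x, 1 / 2 * ((g1 x - g0 x) * Real.log (g1 x / g0 x)) ∂μ) :=
            (ofReal_integral_eq_lintegral_ofReal (hint_dL.const_mul _)
              (ae_of_all _ hnn)).symm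
        _ = ENNReal.ofReal (1 / 2 * S) := by rw [integral_const_mul]
    have hIv : ∫⁻ x, ENNReal.ofReal (Real.sqrt (g1 x + g0 x)) ^ (2:ℝ) ∂μ
        = ENNReal.ofReal 2 := by
      have hptv : ∀ x, ENNReal.ofReal (Real.sqrt (g1 x + g0 x)) ^ (2:ℝ)
          = ENNReal.ofReal (g1 x + g0 x) := by
        intro x
        rw [hsq _ (Real.sqrt_nonneg _), Real.mul_self_sqrt (hs_pos x).le]
      rw [lintegral_congr fun x => hptv x,
        ← ofReal_integral_eq_lintegral_ofReal his
          (ae_of_all _ fun x => (hs_pos x).le),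
        integral_add hig1 hig0, hg1one, hg0one]
      norm_num
    -- combine
    have hmain : ENNReal.ofReal (∫ x, |g1 x - g0 x| ∂μ) ≤ ENNReal.ofReal (Real.sqrt S) := by
      calc ENNReal.ofReal (∫ x, |g1 x - g0 x| ∂μ)
          = ∫⁻ x, ENNReal.ofReal (|g1 x - g0 x| / Real.sqrt (g1 x + g0 x))
              * ENNReal.ofReal (Real.sqrt (g1 x + g0 x)) ∂μ := hLHS.symm
        _ ≤ (∫⁻ x, ENNReal.ofReal (|g1 x - g0 x| / Real.sqrt (g1 x + g0 x)) ^ (2:ℝ) ∂μ) ^ (1/(2:ℝ))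
            * (∫⁻ x, ENNReal.ofReal (Real.sqrt (g1 x + g0 x)) ^ (2:ℝ) ∂μ) ^ (1/(2:ℝ)) := hCS
        _ ≤ (ENNReal.ofReal (1 / 2 * S)) ^ (1/(2:ℝ)) * (ENNReal.ofReal 2) ^ (1/(2:ℝ)) := by
            rw [hIv]
            exact mul_le_mul_left (ENNReal.rpow_le_rpow hIu (by norm_num)) _
        _ = (ENNReal.ofReal (1 / 2 * S) * ENNReal.ofReal 2) ^ (1/(2:ℝ)) :=
            (ENNReal.mul_rpow_of_nonneg _ _ (by norm_num)).symm
        _ = (ENNReal.ofReal S) ^ (1/(2:ℝ)) := by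
            rw [← ENNReal.ofReal_mul (by linarith)]
            congr 2
            ring
        _ = ENNReal.ofReal (S ^ (1/(2:ℝ))) :=
            ENNReal.ofReal_rpow_of_nonneg hS0 (by norm_num)
        _ = ENNReal.ofReal (Real.sqrt S) := by rw [← Real.sqrt_eq_rpow]
    have hAle : ∫ x, |g1 x - g0 x| ∂μ ≤ Real.sqrt S :=
      (ENNReal.ofReal_le_ofReal_iff (Real.sqrt_nonneg S)).1 hmain
    have hsqS : Real.sqrt S ≤ 2 * Real.sqrt (Real.log Γ) := by
      have h1 : S ≤ 4 * Real.log Γ := by linarith [hSbound]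
      have h2 : Real.sqrt S ≤ Real.sqrt (4 * Real.log Γ) := Real.sqrt_le_sqrt h1
      have h3 : Real.sqrt (4 * Real.log Γ) = 2 * Real.sqrt (Real.log Γ) := by
        rw [show (4:ℝ) * Real.log Γ = 2 ^ 2 * Real.log Γ by norm_num,
          Real.sqrt_mul (by positivity), Real.sqrt_sq (by norm_num)]
      linarith
    linarith [hAle, hsqS]
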